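/- For the SubsetSum instance, the best diffs from β_S to β_T under the family F(≤≥,←+) have cost n if and only if the best diffs from β_S to β_T under the family F(≤≥,+) have cost n. -/

import Mathlib

open scoped Classical

/-- An operation of the family `F(≤≥,+)`: if `dir = true` the condition is `A ≤ a`,
otherwise the condition is `A ≥ a`; the modifier is the increment `B ← B + b`. -/
structure OpIneqAdd where
  dir : Bool
  a : ℝ
  b : ℝ

/-- The condition of an operation, evaluated on an `A`-value `v`. -/
def OpIneqAdd.cond (f : OpIneqAdd) (v : ℤ) : Prop :=
  if f.dir then (v : ℝ) ≤ f.a else f.a ≤ (v : ℝ)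

/-- Applying an operation: every key whose `A`-value satisfies the condition gets
its `B`-value incremented by `b`; other keys are unchanged. -/
noncomputable def OpIneqAdd.apply {K : Type*} (α : K → ℤ) (f : OpIneqAdd) (β : K → ℝ) :
    K → ℝ :=
  fun k => if f.cond (α k) then β k + f.b else β k

/-- Successive application of a finite sequence of operations. -/
noncomputable def applyOpsIneqAdd {K : Type*} (α : K → ℤ) (L : List OpIneqAdd) (β : K → ℝ) :
    K → ℝ :=
  L.foldl (fun β' f => f.apply α β') β

/-- `L` is a diff from `βS` to `βT` under `F(≤≥,+)`. -/
def IsDiffIneqAdd {K : Type*} (α : K → ℤ) (L : List OpIneqAdd) (βS βT : K → ℝ) : Prop :=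
  applyOpsIneqAdd α L βS = βT

/-- `L` is a best diff: a diff of minimum cost (the cost being the number of operations). -/
def IsBestDiffIneqAdd {K : Type*} (α : K → ℤ) (L : List OpIneqAdd) (βS βT : K → ℝ) : Prop :=
  IsDiffIneqAdd α L βS βT ∧
    ∀ L' : List OpIneqAdd, IsDiffIneqAdd α L' βS βT → L.length ≤ L'.length

/-- `A`-values of the SubsetSum instance: `α k = k` on the key set `K = {0,…,n}`. -/
def ssAlpha (n : ℕ) : Fin (n + 1) → ℤ := fun k => ((k : ℕ) : ℤ)

/-- Source `B`-values of the SubsetSum instance: identically `0`. -/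
def ssBS (n : ℕ) : Fin (n + 1) → ℝ := fun _ => 0

/-- Target `B`-values of the SubsetSum instance: `β_T k = b_k = ∑_{ℓ=0}^{k} s ℓ`. -/
noncomputable def ssBT (n : ℕ) (s : ℕ → ℤ) : Fin (n + 1) → ℝ :=
  fun k => ((∑ ℓ ∈ Finset.range ((k : ℕ) + 1), s ℓ : ℤ) : ℝ)

/-- An operation of the family `F(≤≥,←+)`: if `dir = true` the condition is `A ≤ a`,
otherwise `A ≥ a`; if `assign = true` the modifier is the assignment `B ← b`, otherwise
it is the increment `B ← B + b`. -/
structure OpIneqMix where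
  dir : Bool
  assign : Bool
  a : ℝ
  b : ℝ

/-- The condition of an operation of `F(≤≥,←+)`, evaluated on an `A`-value `v`. -/
def OpIneqMix.cond (f : OpIneqMix) (v : ℤ) : Prop :=
  if f.dir then (v : ℝ) ≤ f.a else f.a ≤ (v : ℝ)

/-- Applying an operation of `F(≤≥,←+)`. -/
noncomputable def OpIneqMix.apply {K : Type*} (α : K → ℤ) (f : OpIneqMix) (β : K → ℝ) :
    K → ℝ :=
  fun k => if f.cond (α k) then (if f.assign then f.b else β k + f.b) else β k

/-- Successive application of a finite sequence of operations of `F(≤≥,←+)`. -/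
noncomputable def applyOpsIneqMix {K : Type*} (α : K → ℤ) (L : List OpIneqMix) (β : K → ℝ) :
    K → ℝ :=
  L.foldl (fun β' f => f.apply α β') β

/-- `L` is a diff from `βS` to `βT` under `F(≤≥,←+)`. -/
def IsDiffIneqMix {K : Type*} (α : K → ℤ) (L : List OpIneqMix) (βS βT : K → ℝ) : Prop :=
  applyOpsIneqMix α L βS = βT

/-- `L` is a best diff under `F(≤≥,←+)`. -/
def IsBestDiffIneqMix {K : Type*} (α : K → ℤ) (L : List OpIneqMix) (βS βT : K → ℝ) : Prop :=
  IsDiffIneqMix α L βS βT ∧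
    ∀ L' : List OpIneqMix, IsDiffIneqMix α L' βS βT → L.length ≤ L'.length


namespace SubsetSumAux

variable {n : ℕ}

/-- The set of "boundaries": consecutive key pairs with different `B`-values. -/
noncomputable def bset (n : ℕ) (β : Fin (n+1) → ℝ) : Finset (Fin n) :=
  Finset.univ.filter (fun i => β i.castSucc ≠ β i.succ)

noncomputable def dcount (n : ℕ) (β : Fin (n+1) → ℝ) : ℕ := (bset n β).card

lemma mem_bset {β : Fin (n+1) → ℝ} {i : Fin n} :
    i ∈ bset n β ↔ β i.castSucc ≠ β i.succ := by
  simp [bset]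

lemma cond_true {f : OpIneqMix} (hdir : f.dir = true) (k : Fin (n+1)) :
    f.cond (ssAlpha n k) ↔ ((k : ℕ) : ℝ) ≤ f.a := by
  simp [OpIneqMix.cond, ssAlpha, hdir]

lemma cond_false {f : OpIneqMix} (hdir : f.dir = false) (k : Fin (n+1)) :
    f.cond (ssAlpha n k) ↔ f.a ≤ ((k : ℕ) : ℝ) := by
  simp [OpIneqMix.cond, ssAlpha, hdir]

lemma cross_unique (f : OpIneqMix) {i j : Fin n}
    (hi : ¬ (f.cond (ssAlpha n i.castSucc) ↔ f.cond (ssAlpha n i.succ)))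
    (hj : ¬ (f.cond (ssAlpha n j.castSucc) ↔ f.cond (ssAlpha n j.succ))) : i = j := by
  cases hdir : f.dir
  · rw [cond_false hdir, cond_false hdir] at hi hj
    simp only [Fin.coe_castSucc, Fin.val_succ] at hi hj
    push_cast at hi hj
    have hi1 : ¬ (f.a ≤ ((i : ℕ) : ℝ)) := fun h => hi ⟨fun _ => by linarith, fun _ => h⟩
    have hi2 : f.a ≤ ((i : ℕ) : ℝ) + 1 := by
      by_contra h
      exact hi (iff_of_false hi1 h)
    have hj1 : ¬ (f.a ≤ ((j : ℕ) : ℝ)) := fun h => hj ⟨fun _ => by linarith, fun _ => h⟩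
    have hj2 : f.a ≤ ((j : ℕ) : ℝ) + 1 := by
      by_contra h
      exact hj (iff_of_false hj1 h)
    push_neg at hi1 hj1
    have h1 : ((i : ℕ) : ℝ) < ((j : ℕ) : ℝ) + 1 := lt_of_lt_of_le hi1 hj2
    have h2 : ((j : ℕ) : ℝ) < ((i : ℕ) : ℝ) + 1 := lt_of_lt_of_le hj1 hi2
    have h1' : (i : ℕ) < (j : ℕ) + 1 := by exact_mod_cast h1
    have h2' : (j : ℕ) < (i : ℕ) + 1 := by exact_mod_cast h2
    exact Fin.ext (by omega)
  · rw [cond_true hdir, cond_true hdir] at hi hj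
    simp only [Fin.coe_castSucc, Fin.val_succ] at hi hj
    push_cast at hi hj
    have hi2 : ¬ (((i : ℕ) : ℝ) + 1 ≤ f.a) := fun h => hi ⟨fun _ => h, fun _ => by linarith⟩
    have hi1 : ((i : ℕ) : ℝ) ≤ f.a := by
      by_contra h
      exact hi (iff_of_false h hi2)
    have hj2 : ¬ (((j : ℕ) : ℝ) + 1 ≤ f.a) := fun h => hj ⟨fun _ => h, fun _ => by linarith⟩
    have hj1 : ((j : ℕ) : ℝ) ≤ f.a := by
      by_contra h
      exact hj (iff_of_false h hj2)
    push_neg at hi2 hj2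
    have h1 : ((i : ℕ) : ℝ) < ((j : ℕ) : ℝ) + 1 := lt_of_le_of_lt hi1 hj2
    have h2 : ((j : ℕ) : ℝ) < ((i : ℕ) : ℝ) + 1 := lt_of_le_of_lt hj1 hi2
    have h1' : (i : ℕ) < (j : ℕ) + 1 := by exact_mod_cast h1
    have h2' : (j : ℕ) < (i : ℕ) + 1 := by exact_mod_cast h2
    exact Fin.ext (by omega)

/-- If the condition does not change across a pair, a new boundary there implies an
old boundary, and (in the assign case) the condition must be false there. -/
lemma apply_boundary (f : OpIneqMix) (β : Fin (n+1) → ℝ) (j : Fin n)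
    (hiff : f.cond (ssAlpha n j.castSucc) ↔ f.cond (ssAlpha n j.succ))
    (hne : f.apply (ssAlpha n) β j.castSucc ≠ f.apply (ssAlpha n) β j.succ) :
    β j.castSucc ≠ β j.succ ∧ (f.assign = true → ¬ f.cond (ssAlpha n j.castSucc)) := by
  by_cases hP : f.cond (ssAlpha n j.castSucc)
  · have hP2 := hiff.mp hP
    cases hA : f.assign
    · simp only [OpIneqMix.apply, if_pos hP, if_pos hP2, hA, if_neg (Bool.false_ne_true)] at hne
      refine ⟨fun h => hne (by rw [h]), fun h1 => by simp [hA] at h1⟩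
    · exfalso
      simp only [OpIneqMix.apply, if_pos hP, if_pos hP2, hA, if_pos rfl] at hne
      exact hne rfl
  · have hP2 : ¬ f.cond (ssAlpha n j.succ) := fun h => hP (hiff.mpr h)
    simp only [OpIneqMix.apply, if_neg hP, if_neg hP2] at hne
    exact ⟨hne, fun _ => hP⟩

lemma step_le (f : OpIneqMix) (β : Fin (n+1) → ℝ) :
    dcount n (f.apply (ssAlpha n) β) ≤ dcount n β + 1 := by
  by_cases hc : ∃ j : Fin n, ¬ (f.cond (ssAlpha n j.castSucc) ↔ f.cond (ssAlpha n j.succ))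
  · obtain ⟨j₀, hj₀⟩ := hc
    have hsub : bset n (f.apply (ssAlpha n) β) ⊆ insert j₀ (bset n β) := by
      intro j hj
      rw [mem_bset] at hj
      by_cases hcr : ¬ (f.cond (ssAlpha n j.castSucc) ↔ f.cond (ssAlpha n j.succ))
      · exact Finset.mem_insert.mpr (Or.inl (cross_unique f hcr hj₀))
      · push_neg at hcr
        exact Finset.mem_insert.mpr (Or.inr (mem_bset.mpr (apply_boundary f β j hcr hj).1))
    calc dcount n (f.apply (ssAlpha n) β) ≤ (insert j₀ (bset n β)).card :=
          Finset.card_le_card hsub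
      _ ≤ dcount n β + 1 := Finset.card_insert_le _ _
  · push_neg at hc
    have hsub : bset n (f.apply (ssAlpha n) β) ⊆ bset n β := by
      intro j hj
      rw [mem_bset] at hj
      exact mem_bset.mpr (apply_boundary f β j (hc j) hj).1
    exact le_trans (Finset.card_le_card hsub) (Nat.le_succ _)

lemma steps_le (L : List OpIneqMix) (β : Fin (n+1) → ℝ) :
    dcount n (applyOpsIneqMix (ssAlpha n) L β) ≤ dcount n β + L.length := by
  induction L generalizing β with
  | nil => simp [applyOpsIneqMix]
  | cons f L ih =>
    have h1 : applyOpsIneqMix (ssAlpha n) (f :: L) β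
        = applyOpsIneqMix (ssAlpha n) L (f.apply (ssAlpha n) β) := rfl
    rw [h1]
    calc dcount n (applyOpsIneqMix (ssAlpha n) L (f.apply (ssAlpha n) β))
        ≤ dcount n (f.apply (ssAlpha n) β) + L.length := ih _
      _ ≤ (dcount n β + 1) + L.length := by
          have := step_le (n := n) f β
          omega
      _ = dcount n β + (f :: L).length := by simp; omega

/-- If an assign operation strictly increases the boundary count, then the source is
constant on the condition region, and the region is nonempty. -/
lemma assign_const (f : OpIneqMix) (hA : f.assign = true) (β : Fin (n+1) → ℝ)
    (hgrow : dcount n (f.apply (ssAlpha n) β) = dcount n β + 1) :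
    (∀ i : Fin n, f.cond (ssAlpha n i.castSucc) → f.cond (ssAlpha n i.succ) →
      β i.castSucc = β i.succ) ∧ (∃ k : Fin (n+1), f.cond (ssAlpha n k)) := by
  constructor
  · by_contra hex
    push_neg at hex
    obtain ⟨i, hP1, hP2, hne⟩ := hex
    have himem : i ∈ bset n β := mem_bset.mpr hne
    have hcard : dcount n (f.apply (ssAlpha n) β) ≤ dcount n β := by
      by_cases hc : ∃ j : Fin n, ¬ (f.cond (ssAlpha n j.castSucc) ↔ f.cond (ssAlpha n j.succ))
      · obtain ⟨j₀, hj₀⟩ := hc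
        have hsub : bset n (f.apply (ssAlpha n) β) ⊆ insert j₀ ((bset n β).erase i) := by
          intro j hj
          rw [mem_bset] at hj
          by_cases hcr : ¬ (f.cond (ssAlpha n j.castSucc) ↔ f.cond (ssAlpha n j.succ))
          · exact Finset.mem_insert.mpr (Or.inl (cross_unique f hcr hj₀))
          · push_neg at hcr
            have hb := apply_boundary f β j hcr hj
            have hji : j ≠ i := by
              intro h
              subst h
              exact (hb.2 hA) hP1
            exact Finset.mem_insert.mpr (Or.inr (Finset.mem_erase.mpr ⟨hji, mem_bset.mpr hb.1⟩))
        have hpos : 1 ≤ (bset n β).card := Finset.card_pos.mpr ⟨i, himem⟩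
        calc dcount n (f.apply (ssAlpha n) β) ≤ (insert j₀ ((bset n β).erase i)).card :=
              Finset.card_le_card hsub
          _ ≤ ((bset n β).erase i).card + 1 := Finset.card_insert_le _ _
          _ = ((bset n β).card - 1) + 1 := by rw [Finset.card_erase_of_mem himem]
          _ = dcount n β := by unfold dcount; omega
      · push_neg at hc
        have hsub : bset n (f.apply (ssAlpha n) β) ⊆ (bset n β).erase i := by
          intro j hj
          rw [mem_bset] at hj
          have hb := apply_boundary f β j (hc j) hj
          have hji : j ≠ i := by
            intro h
            subst h
            exact (hb.2 hA) hP1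
          exact Finset.mem_erase.mpr ⟨hji, mem_bset.mpr hb.1⟩
        calc dcount n (f.apply (ssAlpha n) β) ≤ ((bset n β).erase i).card :=
              Finset.card_le_card hsub
          _ ≤ (bset n β).card := Finset.card_erase_le
    omega
  · by_contra hk
    push_neg at hk
    have : f.apply (ssAlpha n) β = β := by
      funext k
      simp only [OpIneqMix.apply, if_neg (hk k)]
    rw [this] at hgrow
    omega

lemma const_prefix (f : OpIneqMix) (hdir : f.dir = true) (β : Fin (n+1) → ℝ)
    (hnb : ∀ i : Fin n, f.cond (ssAlpha n i.castSucc) → f.cond (ssAlpha n i.succ) →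
      β i.castSucc = β i.succ) :
    ∀ k : Fin (n+1), f.cond (ssAlpha n k) → β k = β 0 := by
  suffices H : ∀ m (hm : m < n+1), f.cond (ssAlpha n ⟨m, hm⟩) → β ⟨m, hm⟩ = β 0 by
    intro k hk
    have hk' : f.cond (ssAlpha n ⟨k.val, k.isLt⟩) := by
      convert hk using 2
    have := H k.val k.isLt hk'
    convert this using 2
  intro m
  induction m with
  | zero =>
    intro hm _
    have h0 : (⟨0, hm⟩ : Fin (n+1)) = 0 := by ext; simp
    rw [h0]
  | succ m ih =>
    intro hm hk
    have hmn : m < n := by omega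
    have hcs : (⟨m, hmn⟩ : Fin n).castSucc = ⟨m, by omega⟩ := rfl
    have hsu : (⟨m, hmn⟩ : Fin n).succ = ⟨m+1, hm⟩ := rfl
    have hck : f.cond (ssAlpha n ⟨m, by omega⟩) := by
      rw [cond_true hdir] at hk ⊢
      have : ((m : ℕ) : ℝ) ≤ ((m+1 : ℕ) : ℝ) := by push_cast; linarith
      exact le_trans this hk
    have heq := hnb ⟨m, hmn⟩ (by rw [hcs]; exact hck) (by rw [hsu]; exact hk)
    rw [hcs, hsu] at heq
    rw [← heq]
    exact ih _ hck

lemma const_suffix (f : OpIneqMix) (hdir : f.dir = false) (β : Fin (n+1) → ℝ)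
    (hnb : ∀ i : Fin n, f.cond (ssAlpha n i.castSucc) → f.cond (ssAlpha n i.succ) →
      β i.castSucc = β i.succ) :
    ∀ k : Fin (n+1), f.cond (ssAlpha n k) → β k = β (Fin.last n) := by
  suffices H : ∀ d m (hm : m < n+1), m + d = n → f.cond (ssAlpha n ⟨m, hm⟩) →
      β ⟨m, hm⟩ = β (Fin.last n) by
    intro k hk
    have hk' : f.cond (ssAlpha n ⟨k.val, k.isLt⟩) := by
      convert hk using 2
    have := H (n - k.val) k.val k.isLt (by omega) hk'
    convert this using 2
  intro d
  induction d with
  | zero =>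
    intro m hm hmn _
    have : m = n := by omega
    subst this
    rfl
  | succ d ih =>
    intro m hm hmn hk
    have hmn' : m < n := by omega
    have hcs : (⟨m, hmn'⟩ : Fin n).castSucc = ⟨m, hm⟩ := rfl
    have hsu : (⟨m, hmn'⟩ : Fin n).succ = ⟨m+1, by omega⟩ := rfl
    have hck : f.cond (ssAlpha n ⟨m+1, by omega⟩) := by
      rw [cond_false hdir] at hk ⊢
      have : ((m : ℕ) : ℝ) ≤ ((m+1 : ℕ) : ℝ) := by push_cast; linarith
      exact le_trans hk this
    have heq := hnb ⟨m, hmn'⟩ (by rw [hcs]; exact hk) (by rw [hsu]; exact hck)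
    rw [hcs, hsu] at heq
    rw [heq]
    exact ih (m+1) (by omega) (by omega) hck

/-- Key replacement lemma: a Mix sequence whose boundary count grows maximally can be
replaced by an Add sequence of the same length with the same effect. -/
lemma repl : ∀ (L : List OpIneqMix) (β : Fin (n+1) → ℝ),
    dcount n (applyOpsIneqMix (ssAlpha n) L β) = dcount n β + L.length →
    ∃ L' : List OpIneqAdd, L'.length = L.length ∧
      applyOpsIneqAdd (ssAlpha n) L' β = applyOpsIneqMix (ssAlpha n) L β := by
  intro L
  induction L with
  | nil => exact fun β _ => ⟨[], rfl, rfl⟩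
  | cons f L ih =>
    intro β h
    set β1 := f.apply (ssAlpha n) β with hβ1
    have hcons : applyOpsIneqMix (ssAlpha n) (f :: L) β
        = applyOpsIneqMix (ssAlpha n) L β1 := rfl
    rw [hcons] at h
    have hlen : (f :: L).length = L.length + 1 := rfl
    rw [hlen] at h
    have h1 : dcount n β1 ≤ dcount n β + 1 := step_le f β
    have h2 : dcount n (applyOpsIneqMix (ssAlpha n) L β1) ≤ dcount n β1 + L.length :=
      steps_le L β1
    have hexact : dcount n β1 = dcount n β + 1 := by omega
    have htail : dcount n (applyOpsIneqMix (ssAlpha n) L β1) = dcount n β1 + L.length := by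
      omega
    obtain ⟨L', hL'len, hL'⟩ := ih β1 htail
    -- find an Add op with the same effect as f
    have hop : ∃ g : OpIneqAdd, g.apply (ssAlpha n) β = β1 := by
      cases hA : f.assign
      · refine ⟨⟨f.dir, f.a, f.b⟩, ?_⟩
        funext k
        have hcond : (OpIneqAdd.mk f.dir f.a f.b).cond (ssAlpha n k) ↔ f.cond (ssAlpha n k) :=
          Iff.rfl
        by_cases hk : f.cond (ssAlpha n k)
        · simp only [hβ1, OpIneqAdd.apply, OpIneqMix.apply, if_pos (hcond.mpr hk),
            if_pos hk, hA, if_neg Bool.false_ne_true]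
        · simp only [hβ1, OpIneqAdd.apply, OpIneqMix.apply, if_neg (fun h => hk (hcond.mp h)),
            if_neg hk]
      · obtain ⟨hnb, k₀, hk₀⟩ := assign_const f hA β hexact
        cases hdir : f.dir
        · -- suffix : anchor at last
          have hconst := const_suffix f hdir β hnb
          refine ⟨⟨f.dir, f.a, f.b - β (Fin.last n)⟩, ?_⟩
          funext k
          have hcond : (OpIneqAdd.mk f.dir f.a (f.b - β (Fin.last n))).cond (ssAlpha n k)
              ↔ f.cond (ssAlpha n k) := Iff.rfl
          by_cases hk : f.cond (ssAlpha n k)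
          · simp only [hβ1, OpIneqAdd.apply, OpIneqMix.apply, if_pos (hcond.mpr hk),
              if_pos hk, hA, if_pos rfl, if_true]
            rw [hconst k hk]
            ring
          · simp only [hβ1, OpIneqAdd.apply, OpIneqMix.apply,
              if_neg (fun h => hk (hcond.mp h)), if_neg hk]
        · -- prefix : anchor at 0
          have hconst := const_prefix f hdir β hnb
          refine ⟨⟨f.dir, f.a, f.b - β 0⟩, ?_⟩
          funext k
          have hcond : (OpIneqAdd.mk f.dir f.a (f.b - β 0)).cond (ssAlpha n k)
              ↔ f.cond (ssAlpha n k) := Iff.rfl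
          by_cases hk : f.cond (ssAlpha n k)
          · simp only [hβ1, OpIneqAdd.apply, OpIneqMix.apply, if_pos (hcond.mpr hk),
              if_pos hk, hA, if_pos rfl, if_true]
            rw [hconst k hk]
            ring
          · simp only [hβ1, OpIneqAdd.apply, OpIneqMix.apply,
              if_neg (fun h => hk (hcond.mp h)), if_neg hk]
    obtain ⟨g, hg⟩ := hop
    refine ⟨g :: L', by simp [hL'len], ?_⟩
    have : applyOpsIneqAdd (ssAlpha n) (g :: L') β
        = applyOpsIneqAdd (ssAlpha n) L' (g.apply (ssAlpha n) β) := rfl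
    rw [this, hg, hL', hcons]

def toMix (f : OpIneqAdd) : OpIneqMix := ⟨f.dir, false, f.a, f.b⟩

lemma toMix_cond (f : OpIneqAdd) (v : ℤ) : (toMix f).cond v ↔ f.cond v := Iff.rfl

lemma toMix_assign (f : OpIneqAdd) : (toMix f).assign = false := rfl

lemma toMix_b (f : OpIneqAdd) : (toMix f).b = f.b := rfl

lemma toMix_apply (f : OpIneqAdd) (β : Fin (n+1) → ℝ) :
    (toMix f).apply (ssAlpha n) β = f.apply (ssAlpha n) β := by
  funext k
  by_cases hk : f.cond (ssAlpha n k)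
  · simp only [OpIneqMix.apply, OpIneqAdd.apply, if_pos ((toMix_cond f _).mpr hk), if_pos hk,
      toMix_assign, toMix_b, if_neg Bool.false_ne_true, Bool.false_eq_true, ↓reduceIte]
  · simp only [OpIneqMix.apply, OpIneqAdd.apply,
      if_neg (fun h => hk ((toMix_cond f _).mp h)), if_neg hk]

lemma applyOps_map_toMix (L : List OpIneqAdd) (β : Fin (n+1) → ℝ) :
    applyOpsIneqMix (ssAlpha n) (L.map toMix) β = applyOpsIneqAdd (ssAlpha n) L β := by
  induction L generalizing β with
  | nil => rfl
  | cons f L ih =>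
    have h1 : applyOpsIneqMix (ssAlpha n) ((f :: L).map toMix) β
        = applyOpsIneqMix (ssAlpha n) (L.map toMix) ((toMix f).apply (ssAlpha n) β) := rfl
    rw [h1, toMix_apply, ih]
    rfl

end SubsetSumAux


/-- For the SubsetSum instance, the best diffs from `β_S` to `β_T` under `F(≤≥,←+)` have
cost `n` if and only if the best diffs from `β_S` to `β_T` under `F(≤≥,+)` have cost `n`. -/
theorem subsetSum_mix_best_cost_iff_add_best_cost (n : ℕ) (s : ℕ → ℤ) (t : ℤ)
    (ht : 0 < t) (hs0 : s 0 = -t) (hpos : ∀ i, 1 ≤ i → i ≤ n → 0 < s i) :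
    (∃ F : List OpIneqMix,
        IsBestDiffIneqMix (ssAlpha n) F (ssBS n) (ssBT n s) ∧ F.length = n) ↔
      ∃ F : List OpIneqAdd,
        IsBestDiffIneqAdd (ssAlpha n) F (ssBS n) (ssBT n s) ∧ F.length = n := by
  classical
  open SubsetSumAux in
  have hDS : dcount n (ssBS n) = 0 := by
    have : bset n (ssBS n) = ∅ := by
      ext i
      simp [mem_bset, ssBS]
    simp [dcount, this]
  have hDT : dcount n (ssBT n s) = n := by
    have hb : bset n (ssBT n s) = Finset.univ := by
      ext i
      simp only [Finset.mem_univ, iff_true, mem_bset]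
      intro h
      simp only [ssBT, Fin.coe_castSucc, Fin.val_succ] at h
      have h' : (∑ ℓ ∈ Finset.range ((i : ℕ) + 1), s ℓ)
          = ∑ ℓ ∈ Finset.range ((i : ℕ) + 1 + 1), s ℓ := by exact_mod_cast h
      nth_rewrite 2 [Finset.sum_range_succ] at h'
      have hsp : 0 < s ((i : ℕ) + 1) := hpos _ (by omega) (by have := i.isLt; omega)
      omega
    simp [dcount, hb]
  have lbM : ∀ L : List OpIneqMix,
      IsDiffIneqMix (ssAlpha n) L (ssBS n) (ssBT n s) → n ≤ L.length := by
    intro L hL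
    have := steps_le (n := n) L (ssBS n)
    rw [hL, hDT, hDS] at this
    omega
  constructor
  · rintro ⟨F, ⟨hdiff, _⟩, hlenF⟩
    have hd : dcount n (applyOpsIneqMix (ssAlpha n) F (ssBS n))
        = dcount n (ssBS n) + F.length := by
      rw [hdiff, hDT, hDS, hlenF]
      omega
    obtain ⟨L', hlen', heq⟩ := repl F (ssBS n) hd
    have hdiff' : IsDiffIneqAdd (ssAlpha n) L' (ssBS n) (ssBT n s) := by
      unfold IsDiffIneqAdd
      rw [heq, hdiff]
    refine ⟨L', ⟨hdiff', ?_⟩, by rw [hlen', hlenF]⟩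
    intro L'' hL''
    have : IsDiffIneqMix (ssAlpha n) (L''.map toMix) (ssBS n) (ssBT n s) := by
      unfold IsDiffIneqMix
      rw [applyOps_map_toMix]
      exact hL''
    have := lbM _ this
    rw [List.length_map] at this
    omega
  · rintro ⟨F, ⟨hdiff, _⟩, hlenF⟩
    refine ⟨F.map toMix, ⟨?_, ?_⟩, by simp [hlenF]⟩
    · unfold IsDiffIneqMix
      rw [applyOps_map_toMix]
      exact hdiff
    · intro L' hL'
      have := lbM L' hL'
      rw [List.length_map]
      omega
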